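/- Let O ⊆ ℝ^d be open and let h : O → ℝ be convex and of class C². Then for every Borel set ω ⊆ O, the Lebesgue measure of the image of ω under the gradient map, L( { ∇h(x) : x ∈ ω } ), equals ∫_ω det(Hess h(x)) dx, the Lebesgue integral over ω of the (nonnegative) determinant of the Hessian of h. -/

import Mathlib

open MeasureTheory Set Filter
open scoped RealInnerProductSpace Topology

section aux

variable {E : Type*} [NormedAddCommGroup E] [InnerProductSpace ℝ E] [CompleteSpace E]

noncomputable def dIso (E : Type*) [NormedAddCommGroup E] [InnerProductSpace ℝ E]
    [CompleteSpace E] : (E →L[ℝ] ℝ) →L[ℝ] E where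
  toFun ℓ := (InnerProductSpace.toDual ℝ E).symm ℓ
  map_add' a b := by simp
  map_smul' r a := by simp
  cont := (InnerProductSpace.toDual ℝ E).symm.continuous

lemma inner_dIso (ℓ : E →L[ℝ] ℝ) (w : E) : ⟪dIso E ℓ, w⟫ = ℓ w :=
  InnerProductSpace.toDual_symm_apply

lemma gradient_eq_dIso (h : E → ℝ) (x : E) : gradient h x = dIso E (fderiv ℝ h x) := rfl

lemma inner_gradient_eq {h : E → ℝ} {z : E} (w : E) :
    ⟪gradient h z, w⟫ = fderiv ℝ h z w := inner_dIso _ _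

lemma hasFDerivAt_gradient {h : E → ℝ} {O : Set E} (hO : IsOpen O)
    (hreg : ContDiffOn ℝ 2 h O) {x : E} (hx : x ∈ O) :
    HasFDerivAt (gradient h) ((dIso E).comp (fderiv ℝ (fderiv ℝ h) x)) x := by
  have h1 : ContDiffOn ℝ 1 (fderiv ℝ h) O := hreg.fderiv_of_isOpen hO (by norm_num)
  have h2 : DifferentiableAt ℝ (fderiv ℝ h) x :=
    (h1.differentiableOn (by norm_num)).differentiableAt (hO.mem_nhds hx)
  exact ((dIso E).hasFDerivAt.comp x h2.hasFDerivAt : _)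

/-- Monotonicity of the gradient of a convex function. -/
lemma grad_mono {h : E → ℝ} {O : Set E} (hO : IsOpen O) (hconv : ConvexOn ℝ O h)
    (hreg : ContDiffOn ℝ 2 h O) {x y : E} (hx : x ∈ O) (hy : y ∈ O) :
    0 ≤ ⟪gradient h y - gradient h x, y - x⟫ := by
  set L : ℝ →ᵃ[ℝ] E := AffineMap.lineMap x y with hL
  have hg : ConvexOn ℝ (L ⁻¹' O) (h ∘ L) := hconv.comp_affineMap L
  have hLfun : ∀ t : ℝ, L t = x + t • (y - x) := by
    intro t
    rw [hL, AffineMap.lineMap_apply_module]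
    module
  have hderiv : ∀ z ∈ O, ∀ t : ℝ, L t = z → HasDerivAt (h ∘ L) ⟪gradient h z, y - x⟫ t := by
    intro z hz t hzt
    subst hzt
    have hdh : DifferentiableAt ℝ h (L t) :=
      (hreg.differentiableOn (by norm_num)).differentiableAt (hO.mem_nhds hz)
    have hcurve : HasDerivAt (fun t : ℝ => x + t • (y - x)) (y - x) t := by
      simpa using ((hasDerivAt_id t).smul_const (y - x)).const_add x
    have hcurve' : HasDerivAt L (y - x) t := by
      simpa only [← funext hLfun] using hcurve
    have := hdh.hasFDerivAt.comp_hasDerivAt t hcurve'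
    simpa [inner_gradient_eq] using this
  have h0 : (0 : ℝ) ∈ L ⁻¹' O := by simp [hL, hx]
  have h1 : (1 : ℝ) ∈ L ⁻¹' O := by simp [hL, hy]
  have hd0 := hderiv x hx 0 (by simp [hL])
  have hd1 := hderiv y hy 1 (by simp [hL])
  have e1 : ⟪gradient h x, y - x⟫ ≤ slope (h ∘ L) 0 1 :=
    hg.le_slope_of_hasDerivAt h0 h1 zero_lt_one hd0
  have e2 : slope (h ∘ L) 0 1 ≤ ⟪gradient h y, y - x⟫ :=
    hg.slope_le_of_hasDerivAt h0 h1 zero_lt_one hd1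
  rw [inner_sub_left]
  linarith

/-- The second derivative quadratic form of a convex function is nonnegative. -/
lemma grad_snd_nonneg {h : E → ℝ} {O : Set E} (hO : IsOpen O) (hconv : ConvexOn ℝ O h)
    (hreg : ContDiffOn ℝ 2 h O) {x : E} (hx : x ∈ O) (v : E) :
    0 ≤ ⟪fderiv ℝ (gradient h) x v, v⟫ := by
  set f := gradient h with hfdef
  have hF : HasFDerivAt f (fderiv ℝ f x) x :=
    (hasFDerivAt_gradient hO hreg hx).differentiableAt.hasFDerivAt
  set ψ : ℝ → ℝ := fun t => ⟪v, f (x + t • v)⟫ with hψ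
  have hcurve : ∀ t : ℝ, HasDerivAt (fun s : ℝ => x + s • v) v t := fun t => by
    simpa using ((hasDerivAt_id t).smul_const v).const_add x
  have hψd : HasDerivAt ψ ⟪v, fderiv ℝ f x v⟫ 0 := by
    have hF0 : HasFDerivAt f (fderiv ℝ f x) ((fun s : ℝ => x + s • v) 0) := by
      simpa using hF
    have h1 : HasDerivAt (fun t : ℝ => f (x + t • v)) (fderiv ℝ f x v) 0 :=
      HasFDerivAt.comp_hasDerivAt (l := f) 0 hF0 (hcurve 0)
    exact ((innerSL ℝ v).hasFDerivAt.comp_hasDerivAt 0 h1)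
  have hev : ∀ᶠ t in 𝓝[>] (0 : ℝ), 0 ≤ slope ψ 0 t := by
    have hcont : ∀ᶠ t in 𝓝 (0 : ℝ), x + t • v ∈ O := by
      have : Continuous fun t : ℝ => x + t • v := by continuity
      have := this.continuousAt (x := (0 : ℝ)) (hO.mem_nhds (by simpa using hx))
      exact this
    filter_upwards [nhdsWithin_le_nhds hcont, self_mem_nhdsWithin] with t htO (ht : 0 < t)
    have hm := grad_mono hO hconv hreg hx htO
    have : (x + t • v) - x = t • v := by abel
    rw [this, real_inner_smul_right] at hm
    have h2 : 0 ≤ ⟪f (x + t • v) - f x, v⟫ := by nlinarith [hm, ht]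
    have h3 : ψ t - ψ 0 = ⟪f (x + t • v) - f x, v⟫ := by
      simp [hψ, inner_sub_left, real_inner_comm]
    rw [slope_def_field]
    exact div_nonneg (h3 ▸ h2) (by linarith)
  have hd' : Filter.Tendsto (slope ψ 0) (𝓝[>] (0:ℝ)) (𝓝 ⟪v, fderiv ℝ f x v⟫) :=
    (hasDerivAt_iff_tendsto_slope.mp hψd).mono_left
      (nhdsWithin_mono _ fun t ht => ne_of_gt ht)
  have := ge_of_tendsto hd' hev
  rwa [real_inner_comm] at this

/-- If the gradients at two points agree, then the second derivative at `x` is degenerate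
in the direction `y - x`. -/
lemma grad_snd_deg {h : E → ℝ} {O : Set E} (hO : IsOpen O) (hconv : ConvexOn ℝ O h)
    (hreg : ContDiffOn ℝ 2 h O) {x y : E} (hx : x ∈ O) (hy : y ∈ O)
    (heq : gradient h x = gradient h y) :
    ⟪fderiv ℝ (gradient h) x (y - x), y - x⟫ ≤ 0 := by
  set f := gradient h with hfdef
  set v := y - x with hv
  have hF : HasFDerivAt f (fderiv ℝ f x) x :=
    (hasFDerivAt_gradient hO hreg hx).differentiableAt.hasFDerivAt
  set ψ : ℝ → ℝ := fun t => ⟪v, f (x + t • v)⟫ with hψ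
  have hcurve : ∀ t : ℝ, HasDerivAt (fun s : ℝ => x + s • v) v t := fun t => by
    simpa using ((hasDerivAt_id t).smul_const v).const_add x
  have hψd : HasDerivAt ψ ⟪v, fderiv ℝ f x v⟫ 0 := by
    have hF0 : HasFDerivAt f (fderiv ℝ f x) ((fun s : ℝ => x + s • v) 0) := by
      simpa using hF
    have h1 : HasDerivAt (fun t : ℝ => f (x + t • v)) (fderiv ℝ f x v) 0 :=
      HasFDerivAt.comp_hasDerivAt (l := f) 0 hF0 (hcurve 0)
    exact ((innerSL ℝ v).hasFDerivAt.comp_hasDerivAt 0 h1)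
  have hmemO : ∀ t : ℝ, t ∈ Icc (0:ℝ) 1 → x + t • v ∈ O :=
    fun t ht => hconv.1.add_smul_sub_mem hx hy ht
  have hev : ∀ᶠ t in 𝓝[>] (0 : ℝ), slope ψ 0 t ≤ 0 := by
    filter_upwards [Ioo_mem_nhdsGT_of_mem (Set.left_mem_Ico.mpr zero_lt_one)]
      with t ht
    have htO : x + t • v ∈ O := hmemO t ⟨ht.1.le, ht.2.le⟩
    -- monotonicity between x + t • v and y = x + 1 • v
    have hm := grad_mono hO hconv hreg htO hy
    have hyy : y - (x + t • v) = (1 - t) • v := by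
      rw [hv]; module
    rw [hyy, real_inner_smul_right] at hm
    have h2 : 0 ≤ ⟪f y - f (x + t • v), v⟫ := by nlinarith [hm, ht.2]
    have h3 : ψ t - ψ 0 = -⟪f y - f (x + t • v), v⟫ := by
      have hfy : f x = f y := heq
      simp [hψ, inner_sub_left, real_inner_comm, ← hfy]
    rw [slope_def_field]
    have : ψ t - ψ 0 ≤ 0 := by rw [h3]; linarith
    exact div_nonpos_of_nonpos_of_nonneg this (by linarith [ht.1])
  have hd' : Filter.Tendsto (slope ψ 0) (𝓝[>] (0:ℝ)) (𝓝 ⟪v, fderiv ℝ f x v⟫) :=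
    (hasDerivAt_iff_tendsto_slope.mp hψd).mono_left
      (nhdsWithin_mono _ fun t ht => ne_of_gt ht)
  have := le_of_tendsto hd' hev
  rwa [real_inner_comm] at this

lemma grad_fderiv_symm {h : E → ℝ} {O : Set E} (hO : IsOpen O)
    (hreg : ContDiffOn ℝ 2 h O) {x : E} (hx : x ∈ O) (v w : E) :
    ⟪fderiv ℝ (gradient h) x v, w⟫ = ⟪v, fderiv ℝ (gradient h) x w⟫ := by
  have hfd : fderiv ℝ (gradient h) x = (dIso E).comp (fderiv ℝ (fderiv ℝ h) x) :=
    (hasFDerivAt_gradient hO hreg hx).fderiv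
  have hsym : IsSymmSndFDerivAt ℝ h x :=
    (hreg.contDiffAt (hO.mem_nhds hx)).isSymmSndFDerivAt (by simp [minSmoothness_of_isRCLikeNormedField])
  rw [hfd]
  simp only [ContinuousLinearMap.coe_comp', Function.comp_apply, inner_dIso]
  rw [hsym v w, real_inner_comm]
  simp [inner_dIso]

lemma grad_fderiv_ker {h : E → ℝ} {O : Set E} (hO : IsOpen O) (hconv : ConvexOn ℝ O h)
    (hreg : ContDiffOn ℝ 2 h O) {x y : E} (hx : x ∈ O) (hy : y ∈ O)
    (heq : gradient h x = gradient h y) :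
    fderiv ℝ (gradient h) x (y - x) = 0 := by
  set A := fderiv ℝ (gradient h) x with hA
  set v := y - x with hv
  have hsym : ∀ a b : E, ⟪A a, b⟫ = ⟪a, A b⟫ := grad_fderiv_symm hO hreg hx
  have hQ : ∀ a : E, 0 ≤ ⟪A a, a⟫ := grad_snd_nonneg hO hconv hreg hx
  have hvv : ⟪A v, v⟫ = 0 :=
    le_antisymm (grad_snd_deg hO hconv hreg hx hy heq) (hQ v)
  have key : ∀ w : E, ⟪A v, w⟫ = 0 := by
    intro w
    set c := ⟪A v, w⟫ with hc
    set q := ⟪A w, w⟫ with hq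
    have hq0 : 0 ≤ q := hQ w
    have expand : ∀ t : ℝ, 0 ≤ 2 * t * c + t ^ 2 * q := by
      intro t
      have h0 := hQ (v + t • w)
      have hwv : ⟪A w, v⟫ = ⟪A v, w⟫ := (hsym w v).trans (real_inner_comm w (A v)).symm
      have : ⟪A (v + t • w), v + t • w⟫ = ⟪A v, v⟫ + 2 * t * c + t ^ 2 * q := by
        simp only [map_add, ContinuousLinearMap.map_smul, inner_add_left, inner_add_right,
          real_inner_smul_left, real_inner_smul_right, hwv]
        ring
      rw [this, hvv] at h0
      linarith
    have hc0 : c = 0 := by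
      rcases eq_or_lt_of_le hq0 with hq' | hq'
      · have := expand (-c)
        rw [← hq'] at this
        nlinarith [this]
      · have h2 := expand (-c / q)
        have h3 : 2 * (-c / q) * c + (-c / q) ^ 2 * q = -(c ^ 2) / q := by
          field_simp; ring
        rw [h3] at h2
        have h4 : c ^ 2 ≤ 0 := by
          by_contra hcon
          push_neg at hcon
          have : -(c ^ 2) / q < 0 := div_neg_of_neg_of_pos (by linarith) hq'
          linarith
        have := sq_nonneg c
        have : c ^ 2 = 0 := le_antisymm h4 (sq_nonneg c)
        exact pow_eq_zero_iff (by norm_num) |>.mp this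
    exact hc0
  exact inner_self_eq_zero.mp (key (A v))

omit [CompleteSpace E] in
lemma det_nonneg_of_symm_nonneg [FiniteDimensional ℝ E] (T : E →ₗ[ℝ] E)
    (hT : T.IsSymmetric) (hpos : ∀ a : E, 0 ≤ ⟪T a, a⟫) :
    0 ≤ LinearMap.det T := by
  set n := Module.finrank ℝ E with hn'
  have hn : Module.finrank ℝ E = n := rfl
  set b := hT.eigenvectorBasis hn with hb
  have hdiag : LinearMap.toMatrix b.toBasis b.toBasis T
      = Matrix.diagonal (fun i => hT.eigenvalues hn i) := by
    ext i j
    rw [LinearMap.toMatrix_apply]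
    simp only [OrthonormalBasis.coe_toBasis, hT.apply_eigenvectorBasis]
    rcases eq_or_ne i j with rfl | hij
    · simp [Matrix.diagonal, hb, hT.apply_eigenvectorBasis]
    · simp [Matrix.diagonal, hij, Ne.symm hij, hb, hT.apply_eigenvectorBasis]
  have hdet : LinearMap.det T = ∏ i, hT.eigenvalues hn i := by
    rw [← LinearMap.det_toMatrix b.toBasis, hdiag, Matrix.det_diagonal]
  rw [hdet]
  apply Finset.prod_nonneg
  intro i _
  have h1 := hpos (b i)
  rw [hT.apply_eigenvectorBasis] at h1
  have h2 : ⟪b i, b i⟫ = (1 : ℝ) := by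
    have := b.orthonormal.1 i
    rw [real_inner_self_eq_norm_sq, this]; norm_num
  rw [real_inner_smul_left, h2] at h1
  simpa using h1

end aux

/-- Let `O ⊆ ℝ^d` be open and let `h : O → ℝ` be convex and of class
`C²`.  Then for every Borel `ω ⊆ O`, the Lebesgue measure of the image of `ω` under the
gradient map equals the Lebesgue integral over `ω` of the (nonnegative) determinant of
the Hessian of `h`; i.e. the Monge–Ampère measure of a `C²` convex function has density
`det (Hess h)` with respect to Lebesgue measure. -/
theorem stmt10 (d : ℕ) (O : Set (EuclideanSpace ℝ (Fin d))) (hO : IsOpen O)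
    (h : EuclideanSpace ℝ (Fin d) → ℝ)
    (hconv : ConvexOn ℝ O h) (hreg : ContDiffOn ℝ 2 h O)
    (ω : Set (EuclideanSpace ℝ (Fin d))) (hmeas : MeasurableSet ω) (hω : ω ⊆ O) :
    volume ((fun x => gradient h x) '' ω)
      = ∫⁻ x in ω, ENNReal.ofReal
          (LinearMap.det
            (↑(fderiv ℝ (gradient h) x) :
              EuclideanSpace ℝ (Fin d) →ₗ[ℝ] EuclideanSpace ℝ (Fin d))) := by
  classical
  set f : EuclideanSpace ℝ (Fin d) → EuclideanSpace ℝ (Fin d) :=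
    fun x => gradient h x with hfdef
  set F' : EuclideanSpace ℝ (Fin d) → EuclideanSpace ℝ (Fin d) →L[ℝ] EuclideanSpace ℝ (Fin d) :=
    fun x => fderiv ℝ (gradient h) x with hF'def
  set D : EuclideanSpace ℝ (Fin d) → ℝ :=
    fun x => LinearMap.det
      (↑(F' x) : EuclideanSpace ℝ (Fin d) →ₗ[ℝ] EuclideanSpace ℝ (Fin d)) with hDdef
  have hHas : ∀ x ∈ O, HasFDerivAt f (F' x) x := by
    intro x hx
    rw [hfdef, hF'def]
    exact (hasFDerivAt_gradient hO hreg hx).differentiableAt.hasFDerivAt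
  have hDmeas : Measurable D :=
    ContinuousLinearMap.continuous_det.measurable.comp (measurable_fderiv ℝ (gradient h))
  set A := ω ∩ {x | D x ≠ 0} with hAdef
  have hAmeas : MeasurableSet A :=
    hmeas.inter ((hDmeas (measurableSet_singleton (0 : ℝ))).compl)
  have hdet_nonneg : ∀ x ∈ O, 0 ≤ D x := fun x hx =>
    det_nonneg_of_symm_nonneg _ (grad_fderiv_symm hO hreg hx)
      (grad_snd_nonneg hO hconv hreg hx)
  have hinj : Set.InjOn f A := by
    intro a ha b hb hab
    by_contra hne
    have hker : F' a (b - a) = 0 :=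
      grad_fderiv_ker hO hconv hreg (hω ha.1) (hω hb.1) hab
    have hv : b - a ≠ 0 := sub_ne_zero.mpr (Ne.symm hne)
    have hiff : (∃ m : EuclideanSpace ℝ (Fin d), m ≠ 0 ∧
          (F' a : EuclideanSpace ℝ (Fin d) →ₗ[ℝ] EuclideanSpace ℝ (Fin d)) m = 0) ↔
        LinearMap.det (F' a : EuclideanSpace ℝ (Fin d) →ₗ[ℝ] EuclideanSpace ℝ (Fin d)) = 0 :=
      (LinearMap.hasEigenvalue_zero_tfae
        ((F' a : EuclideanSpace ℝ (Fin d) →ₗ[ℝ] EuclideanSpace ℝ (Fin d)) :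
          Module.End ℝ (EuclideanSpace ℝ (Fin d)))).out 5 3
    exact ha.2 (hiff.mp ⟨b - a, hv, hker⟩)
  set Z := ω \ A with hZdef
  have hZmeas : MeasurableSet Z := hmeas.diff hAmeas
  have hωAZ : ω = A ∪ Z := (Set.union_diff_cancel Set.inter_subset_left).symm
  have hZ0 : volume (f '' Z) = 0 := by
    refine addHaar_image_eq_zero_of_det_fderivWithin_eq_zero volume (f' := F')
      (fun x hx => (hHas x (hω hx.1)).hasFDerivWithinAt) (fun x hx => ?_)
    by_contra hD0
    exact hx.2 ⟨hx.1, hD0⟩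
  have hAim : volume (f '' A) = ∫⁻ x in A, ENNReal.ofReal |D x| :=
    (lintegral_abs_det_fderiv_eq_addHaar_image volume hAmeas
      (fun x hx => (hHas x (hω hx.1)).hasFDerivWithinAt) hinj).symm
  have h1 : volume (f '' ω) = volume (f '' A) := by
    apply le_antisymm
    · calc volume (f '' ω) = volume (f '' A ∪ f '' Z) := by rw [hωAZ, Set.image_union]
        _ ≤ volume (f '' A) + volume (f '' Z) := measure_union_le _ _
        _ = volume (f '' A) := by rw [hZ0, add_zero]
    · exact measure_mono (Set.image_mono Set.inter_subset_left)
  have h2 : ∫⁻ x in ω, ENNReal.ofReal (D x) = ∫⁻ x in A, ENNReal.ofReal (D x) := by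
    rw [hωAZ, lintegral_union hZmeas Set.disjoint_sdiff_right]
    have hzero : ∫⁻ x in Z, ENNReal.ofReal (D x) = 0 := by
      have : ∀ᵐ x ∂(volume.restrict Z), ENNReal.ofReal (D x) = 0 := by
        refine (ae_restrict_iff' hZmeas).mpr (ae_of_all _ fun x hx => ?_)
        have : D x = 0 := by by_contra hD0; exact hx.2 ⟨hx.1, hD0⟩
        simp [this]
      calc ∫⁻ x in Z, ENNReal.ofReal (D x) = ∫⁻ _x in Z, 0 := lintegral_congr_ae this
        _ = 0 := lintegral_zero
    rw [hzero, add_zero]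
  calc volume (f '' ω) = volume (f '' A) := h1
    _ = ∫⁻ x in A, ENNReal.ofReal |D x| := hAim
    _ = ∫⁻ x in A, ENNReal.ofReal (D x) := by
        refine lintegral_congr_ae ((ae_restrict_iff' hAmeas).mpr
          (ae_of_all _ fun x hx => ?_))
        dsimp only
        rw [abs_of_nonneg (hdet_nonneg x (hω hx.1))]
    _ = ∫⁻ x in ω, ENNReal.ofReal (D x) := h2.symm
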